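/- arXiv:2511.16129 — 2 statements merged into one kernel-verified Lean document; each statement's English description precedes it below -/
import Mathlib

section
/- Let m > 1 and 2 ≤ N ≤ m, and assume (H1). Let u₁, u₂ be two radial solutions with b < α₁ < α₂, and on (0,α₁) set t(u) = r₁(u) − r₂(u), ω_i(u) = r_i(u)^{N−1}/(r_i'(u)|r_i'(u)|^{m−2}), and S(u) = ω₁(u)/ω₂(u). Then for u ∈ (b,α₁), S'(u) and t'(u) have the same sign (S'(u) > 0 iff t'(u) > 0, S'(u) = 0 iff t'(u) = 0, and S'(u) < 0 iff t'(u) < 0); and for u ∈ (0,b], if t'(u) ≥ 0 then S'(u) ≤ 0, and if t'(u) ≤ 0 then S'(u) ≥ 0. -/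
open Filter Set MeasureTheory intervalIntegral

noncomputable section

/-- The half-open interval `[0, R)` inside `ℝ`, where `R : EReal` may be `∞`. -/
def domR (R : EReal) : Set ℝ := {r : ℝ | 0 ≤ r ∧ (r : EReal) < R}

/-- The filter describing `r → R⁻` inside `ℝ` (it equals `atTop` when `R = ∞`). -/
def limR (R : EReal) : Filter ℝ := Filter.comap Real.toEReal (nhdsWithin R (Set.Iio R))

/-- Assumption (H1): `f` is continuous on `(0,∞)`, nonpositive on `(0,b]` and
positive on `(b,∞)`, with `b > 0`. -/
def H1cond (b : ℝ) (f : ℝ → ℝ) : Prop :=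
  0 < b ∧ ContinuousOn f (Set.Ioi 0) ∧
    (∀ u : ℝ, 0 < u → u ≤ b → f u ≤ 0) ∧ (∀ u : ℝ, b < u → 0 < f u)

/-- `u` (with derivative `u'`) is a radial solution on `[0, R)` of
`(r^{N-1} |u'|^{m-2} u')' = - r^{N-1} f(u)`, positive, `C¹` up to the origin,
with `u'(0) = 0` and `u, u' → 0` as `r → R`. -/
def IsRadialSolution (N : ℕ) (m : ℝ) (f : ℝ → ℝ) (R : EReal) (u u' : ℝ → ℝ) : Prop :=
  0 < R ∧
  (∀ r ∈ domR R, HasDerivWithinAt u (u' r) (domR R) r) ∧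
  ContinuousOn u' (domR R) ∧
  (∀ r ∈ domR R, 0 < u r) ∧
  u' 0 = 0 ∧
  (∀ r : ℝ, 0 < r → (r : EReal) < R →
    HasDerivAt (fun s : ℝ => s ^ (N - 1) * |u' s| ^ (m - 2) * u' s)
      (-(r ^ (N - 1) * f (u r))) r) ∧
  Filter.Tendsto u (limR R) (nhds 0) ∧
  Filter.Tendsto u' (limR R) (nhds 0)

/-- `rr` is the (strictly decreasing) inverse on `(0, α)` of a radial solution `u`,
with derivatives `rr'`, `rr''`, satisfying the transformed ODE
`(m-1) r'' = (N-1) r'²/r + f(u) |r'|^m r'`. -/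
def IsInvSol (N : ℕ) (m α : ℝ) (f : ℝ → ℝ) (R : EReal) (u rr rr' rr'' : ℝ → ℝ) : Prop :=
  (∀ v ∈ Set.Ioo 0 α,
    0 < rr v ∧ (rr v : EReal) < R ∧ u (rr v) = v ∧
    HasDerivAt rr (rr' v) v ∧ rr' v < 0 ∧ HasDerivAt rr' (rr'' v) v ∧
    (m - 1) * rr'' v = ((N : ℝ) - 1) * (rr' v) ^ 2 / rr v + f v * |rr' v| ^ m * rr' v) ∧
  (∀ x : ℝ, 0 < x → (x : EReal) < R → ∃ v ∈ Set.Ioo 0 α, rr v = x)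

/-- The function `ω(u) = r(u)^{N-1} / (r'(u) |r'(u)|^{m-2})`. -/
def omegaF (N : ℕ) (m : ℝ) (rr rr' : ℝ → ℝ) (v : ℝ) : ℝ :=
  rr v ^ (N - 1) / (rr' v * |rr' v| ^ (m - 2))

/-- The function `P(u) = a u ω(u) + r(u)^N ((m-1)/m · 1/|r'(u)|^m + (a/N) u f(u))`. -/
def PF (N : ℕ) (m a : ℝ) (f rr rr' : ℝ → ℝ) (v : ℝ) : ℝ :=
  a * v * omegaF N m rr rr' v +
    rr v ^ N * ((m - 1) / m * (1 / |rr' v| ^ m) + a / (N : ℝ) * v * f v)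


lemma omega_val (N : ℕ) (m : ℝ) (rr rr' : ℝ → ℝ) (v : ℝ) (hneg : rr' v < 0) :
    omegaF N m rr rr' v = -(rr v ^ (N - 1)) / (-rr' v) ^ (m - 1) := by
  have hA : (0:ℝ) < -rr' v := by linarith
  unfold omegaF
  rw [abs_of_neg hneg, show m - 1 = (m - 2) + 1 by ring, Real.rpow_add_one hA.ne']
  rw [show rr' v * (-rr' v) ^ (m-2) = -((-rr' v) ^ (m-2) * -rr' v) by ring]
  rw [div_neg, neg_div]

lemma omega_deriv (N : ℕ) (m : ℝ) (f : ℝ → ℝ) (rr rr' rr'' : ℝ → ℝ) (v : ℝ)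
    (hm : 1 < m) (hN2 : 2 ≤ N)
    (hr : 0 < rr v) (hd : HasDerivAt rr (rr' v) v) (hneg : rr' v < 0)
    (hd' : HasDerivAt rr' (rr'' v) v)
    (ode : (m - 1) * rr'' v = ((N : ℝ) - 1) * (rr' v) ^ 2 / rr v + f v * |rr' v| ^ m * rr' v) :
    HasDerivAt (omegaF N m rr rr') (f v * rr v ^ (N - 1) * (-rr' v)) v := by
  have hA : (0:ℝ) < -rr' v := by linarith
  have hev : ∀ᶠ w in nhds v, rr' w < 0 :=
    hd'.continuousAt.eventually_lt_const hneg
  -- derivative of the denominator (-rr' ·)^(m-1)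
  have hden : HasDerivAt (fun w => (-rr' w) ^ (m - 1))
      ((m - 1) * (-rr' v) ^ (m - 2) * -(rr'' v)) v := by
    have h1 : HasDerivAt (fun y : ℝ => y ^ (m - 1)) ((m - 1) * (-rr' v) ^ (m - 1 - 1)) (-rr' v) :=
      Real.hasDerivAt_rpow_const (Or.inl hA.ne')
    have h2 := (hd'.neg).rpow_const (p := m - 1) (Or.inl hA.ne')
    exact h2.congr_deriv (by rw [show m - 1 - 1 = m - 2 by ring, Pi.neg_apply]; ring)
  have hdenne : (-rr' v) ^ (m - 1) ≠ 0 := (Real.rpow_pos_of_pos hA _).ne'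
  have hnum : HasDerivAt (fun w => -(rr w ^ (N - 1)))
      (-((N - 1 : ℕ) * rr v ^ (N - 1 - 1) * rr' v)) v := (hd.pow (N - 1)).neg
  have hQ := hnum.div hden hdenne
  have heq : omegaF N m rr rr' =ᶠ[nhds v]
      (fun w => -(rr w ^ (N - 1)) / (-rr' w) ^ (m - 1)) := by
    filter_upwards [hev] with w hw
    exact omega_val N m rr rr' w hw
  have hQ' := hQ.congr_of_eventuallyEq heq
  refine hQ'.congr_deriv ?_
  -- algebra
  obtain ⟨A, hA_def⟩ : ∃ A, A = -rr' v := ⟨_, rfl⟩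
  have hApos : 0 < A := hA_def ▸ hA
  have hr' : rr' v = -A := by rw [hA_def]; ring
  obtain ⟨B, hB_def⟩ : ∃ B, B = A ^ (m - 2) := ⟨_, rfl⟩
  have hBpos : 0 < B := hB_def ▸ Real.rpow_pos_of_pos hApos _
  have hAm1 : A ^ (m - 1) = B * A := by
    rw [show m - 1 = (m - 2) + 1 by ring, Real.rpow_add_one hApos.ne', hB_def]
  have hAm : A ^ m = B * A ^ (2:ℕ) := by
    rw [show m = (m - 2) + 2 by ring, Real.rpow_add hApos, hB_def,
      show ((2:ℝ)) = ((2:ℕ):ℝ) by norm_num, Real.rpow_natCast]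
  obtain ⟨k, hk⟩ : ∃ k, N = k + 2 := ⟨N - 2, by omega⟩
  have hk1 : N - 1 = k + 1 := by omega
  have hk2 : N - 1 - 1 = k := by omega
  have hcast : ((N - 1 : ℕ) : ℝ) = (k : ℝ) + 1 := by rw [hk1]; push_cast; ring
  have hode2 : rr'' v = (((k:ℝ) + 1) * A ^ (2:ℕ) / rr v - f v * B * A ^ (3:ℕ)) / (m - 1) := by
    have hm1 : m - 1 ≠ 0 := by linarith
    rw [eq_div_iff hm1, mul_comm _ (m-1), ode, abs_of_neg hneg, hr', neg_neg A, hAm, hk]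
    push_cast
    ring
  rw [← hA_def, hr', hcast, hk2, hk1, hAm1, ← hB_def, hode2]
  have hm1 : m - 1 ≠ 0 := by linarith
  field_simp
  ring


lemma key_sign (N : ℕ) (m : ℝ) (f : ℝ → ℝ) (r₁ r₁' r₁'' r₂ r₂' r₂'' : ℝ → ℝ) (v : ℝ)
    (hm : 1 < m) (hN2 : 2 ≤ N)
    (hr1 : 0 < r₁ v) (hd1 : HasDerivAt r₁ (r₁' v) v) (hneg1 : r₁' v < 0)
    (hd1' : HasDerivAt r₁' (r₁'' v) v)
    (ode1 : (m - 1) * r₁'' v = ((N : ℝ) - 1) * (r₁' v) ^ 2 / r₁ v + f v * |r₁' v| ^ m * r₁' v)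
    (hr2 : 0 < r₂ v) (hd2 : HasDerivAt r₂ (r₂' v) v) (hneg2 : r₂' v < 0)
    (hd2' : HasDerivAt r₂' (r₂'' v) v)
    (ode2 : (m - 1) * r₂'' v = ((N : ℝ) - 1) * (r₂' v) ^ 2 / r₂ v + f v * |r₂' v| ^ m * r₂' v) :
    ∃ K : ℝ, 0 < K ∧
      deriv (fun w => omegaF N m r₁ r₁' w / omegaF N m r₂ r₂' w) v
        = f v * K * ((-r₂' v) ^ m - (-r₁' v) ^ m) := by
  have hA1 : (0:ℝ) < -r₁' v := by linarith
  have hA2 : (0:ℝ) < -r₂' v := by linarith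
  have hω1 := omega_deriv N m f r₁ r₁' r₁'' v hm hN2 hr1 hd1 hneg1 hd1' ode1
  have hω2 := omega_deriv N m f r₂ r₂' r₂'' v hm hN2 hr2 hd2 hneg2 hd2' ode2
  have hv1 := omega_val N m r₁ r₁' v hneg1
  have hv2 := omega_val N m r₂ r₂' v hneg2
  have hQ1 : (0:ℝ) < (-r₁' v) ^ (m - 1) := Real.rpow_pos_of_pos hA1 _
  have hQ2 : (0:ℝ) < (-r₂' v) ^ (m - 1) := Real.rpow_pos_of_pos hA2 _
  have hP1 : (0:ℝ) < r₁ v ^ (N - 1) := pow_pos hr1 _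
  have hP2 : (0:ℝ) < r₂ v ^ (N - 1) := pow_pos hr2 _
  have hne : omegaF N m r₂ r₂' v ≠ 0 := by
    rw [hv2]
    intro h
    rw [div_eq_zero_iff] at h
    rcases h with h | h
    · linarith
    · linarith
  have hS := (hω1.div hω2 hne).deriv
  have hAm1 : (-r₁' v) ^ m = (-r₁' v) ^ (m - 1) * (-r₁' v) := by
    rw [← Real.rpow_add_one hA1.ne' (m - 1)]; congr 1; ring
  have hAm2 : (-r₂' v) ^ m = (-r₂' v) ^ (m - 1) * (-r₂' v) := by
    rw [← Real.rpow_add_one hA2.ne' (m - 1)]; congr 1; ring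
  refine ⟨r₁ v ^ (N - 1) * r₂ v ^ (N - 1) /
    ((-r₁' v) ^ (m - 1) * (-r₂' v) ^ (m - 1) * (omegaF N m r₂ r₂' v) ^ 2), ?_, ?_⟩
  · exact div_pos (mul_pos hP1 hP2)
      (mul_pos (mul_pos hQ1 hQ2) (pow_two_pos_of_ne_zero hne))
  · rw [show (fun w => omegaF N m r₁ r₁' w / omegaF N m r₂ r₂' w) = omegaF N m r₁ r₁' / omegaF N m r₂ r₂' from rfl, hS, hAm1, hAm2, hv1, hv2]
    field_simp
    ring


/-- `S' = (ω₁/ω₂)'` and `t' = r₁' - r₂'` have the same sign on `(b, α₁)`;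
on `(0, b]`, `t' ≥ 0` implies `S' ≤ 0` and `t' ≤ 0` implies `S' ≥ 0`. -/
theorem stmt14 (N : ℕ) (m b : ℝ) (f : ℝ → ℝ) (hm : 1 < m)
    (hN2 : 2 ≤ N) (hNm : (N : ℝ) ≤ m) (hf : H1cond b f)
    (R₁ R₂ : EReal) (u₁ u₁' u₂ u₂' r₁ r₁' r₁'' r₂ r₂' r₂'' : ℝ → ℝ)
    (h₁ : IsRadialSolution N m f R₁ u₁ u₁')
    (h₂ : IsRadialSolution N m f R₂ u₂ u₂')
    (hb : b < u₁ 0) (h12 : u₁ 0 < u₂ 0)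
    (hi₁ : IsInvSol N m (u₁ 0) f R₁ u₁ r₁ r₁' r₁'')
    (hi₂ : IsInvSol N m (u₂ 0) f R₂ u₂ r₂ r₂' r₂'') :
    (∀ v : ℝ, b < v → v < u₁ 0 →
      (0 < deriv (fun w => omegaF N m r₁ r₁' w / omegaF N m r₂ r₂' w) v ↔
        0 < r₁' v - r₂' v) ∧
      (deriv (fun w => omegaF N m r₁ r₁' w / omegaF N m r₂ r₂' w) v = 0 ↔
        r₁' v - r₂' v = 0) ∧
      (deriv (fun w => omegaF N m r₁ r₁' w / omegaF N m r₂ r₂' w) v < 0 ↔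
        r₁' v - r₂' v < 0)) ∧
    (∀ v : ℝ, 0 < v → v ≤ b →
      (0 ≤ r₁' v - r₂' v →
        deriv (fun w => omegaF N m r₁ r₁' w / omegaF N m r₂ r₂' w) v ≤ 0) ∧
      (r₁' v - r₂' v ≤ 0 →
        0 ≤ deriv (fun w => omegaF N m r₁ r₁' w / omegaF N m r₂ r₂' w) v)) := by
  obtain ⟨hb0, hfc, hfneg, hfpos⟩ := hf
  have key : ∀ v : ℝ, 0 < v → v < u₁ 0 → ∃ K : ℝ, 0 < K ∧ (-r₁' v < -r₂' v ↔ 0 < r₁' v - r₂' v) ∧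
      ((0:ℝ) < -r₁' v) ∧ ((0:ℝ) < -r₂' v) ∧
      deriv (fun w => omegaF N m r₁ r₁' w / omegaF N m r₂ r₂' w) v
        = f v * K * ((-r₂' v) ^ m - (-r₁' v) ^ m) := by
    intro v hv0 hv1
    obtain ⟨hr1, -, -, hd1, hneg1, hd1', ode1⟩ := hi₁.1 v ⟨hv0, hv1⟩
    obtain ⟨hr2, -, -, hd2, hneg2, hd2', ode2⟩ := hi₂.1 v ⟨hv0, lt_trans hv1 h12⟩
    obtain ⟨K, hK, hEq⟩ := key_sign N m f r₁ r₁' r₁'' r₂ r₂' r₂'' v hm hN2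
      hr1 hd1 hneg1 hd1' ode1 hr2 hd2 hneg2 hd2' ode2
    exact ⟨K, hK, by constructor <;> intro <;> linarith, by linarith, by linarith, hEq⟩
  have hmono : ∀ x y : ℝ, 0 < x → 0 < y → (x < y ↔ x ^ m < y ^ m) := by
    intro x y hx hy
    constructor
    · exact fun h => Real.rpow_lt_rpow hx.le h (by linarith)
    · intro h
      by_contra hc
      push_neg at hc
      exact absurd h (not_lt.2 (Real.rpow_le_rpow hy.le hc (by linarith)))
  constructor
  · intro v hbv hv1
    obtain ⟨K, hK, -, hA1, hA2, hEq⟩ := key v (lt_trans hb0 hbv) hv1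
    have hfv : 0 < f v := hfpos v hbv
    have hfK : 0 < f v * K := mul_pos hfv hK
    have hiff : -r₁' v < -r₂' v ↔ (-r₁' v) ^ m < (-r₂' v) ^ m := hmono _ _ hA1 hA2
    have hiff2 : -r₂' v < -r₁' v ↔ (-r₂' v) ^ m < (-r₁' v) ^ m := hmono _ _ hA2 hA1
    rw [hEq]
    refine ⟨⟨fun h => ?_, fun h => ?_⟩, ⟨fun h => ?_, fun h => ?_⟩, ⟨fun h => ?_, fun h => ?_⟩⟩
    · -- 0 < fK * X → 0 < t'
      have hX : 0 < (-r₂' v) ^ m - (-r₁' v) ^ m := by nlinarith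
      have := hiff.2 (by linarith)
      linarith
    · have hX : (-r₁' v) ^ m < (-r₂' v) ^ m := hiff.1 (by linarith)
      nlinarith
    · -- fK * X = 0 → t' = 0
      have hX : (-r₂' v) ^ m - (-r₁' v) ^ m = 0 := by
        rcases mul_eq_zero.1 h with h' | h'
        · exact absurd h' hfK.ne'
        · exact h'
      have h1 : ¬ (-r₁' v < -r₂' v) := fun hc => by have := hiff.1 hc; linarith
      have h2 : ¬ (-r₂' v < -r₁' v) := fun hc => by have := hiff2.1 hc; linarith
      push_neg at h1 h2
      linarith
    · have : -r₂' v = -r₁' v := by linarith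
      rw [this]
      ring
    · -- fK * X < 0 → t' < 0
      have hX : (-r₂' v) ^ m < (-r₁' v) ^ m := by nlinarith
      have := hiff2.2 hX
      linarith
    · have hX : (-r₂' v) ^ m < (-r₁' v) ^ m := hiff2.1 (by linarith)
      nlinarith
  · intro v hv0 hvb
    obtain ⟨K, hK, -, hA1, hA2, hEq⟩ := key v hv0 (lt_of_le_of_lt hvb hb)
    have hfv : f v ≤ 0 := hfneg v hv0 hvb
    rw [hEq]
    constructor
    · intro ht
      have hX : 0 ≤ (-r₂' v) ^ m - (-r₁' v) ^ m := by
        have : -r₁' v ≤ -r₂' v := by linarith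
        have := Real.rpow_le_rpow hA1.le this (by linarith : (0:ℝ) ≤ m)
        linarith
      have hfK : f v * K ≤ 0 := mul_nonpos_of_nonpos_of_nonneg hfv hK.le
      exact mul_nonpos_of_nonpos_of_nonneg hfK hX
    · intro ht
      have hX : (-r₂' v) ^ m - (-r₁' v) ^ m ≤ 0 := by
        have : -r₂' v ≤ -r₁' v := by linarith
        have := Real.rpow_le_rpow hA2.le this (by linarith : (0:ℝ) ≤ m)
        linarith
      have hfK : f v * K ≤ 0 := mul_nonpos_of_nonpos_of_nonneg hfv hK.le
      nlinarith [mul_nonneg (neg_nonneg.2 hfK) (neg_nonneg.2 hX)]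


end
end

section
/- Let m > 1 and 2 ≤ N ≤ m, assume (H1), and assume f is locally Lipschitz continuous on (b,∞). Let u₁, u₂ be two distinct radial solutions with b < α₁ < α₂, and set t(u) = r₁(u) − r₂(u) on (0,α₁). Then t has at least one zero in (0,α₁): there exists u ∈ (0,α₁) with r₁(u) = r₂(u). -/
open Filter Set MeasureTheory intervalIntegral

noncomputable section

section Stmt17Helpers

lemma exists_real_between' {x : ℝ} {R : EReal} (h : (x : EReal) < R) :
    ∃ y : ℝ, x < y ∧ (y : EReal) < R := by
  obtain ⟨c, hc1, hc2⟩ := exists_between h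
  have hct : c ≠ ⊤ := by intro hc; rw [hc] at hc2; exact (not_top_lt hc2)
  have hcb : c ≠ ⊥ := by intro hc; rw [hc] at hc1; exact (not_lt_bot hc1)
  refine ⟨c.toReal, ?_, ?_⟩
  · rw [← EReal.coe_lt_coe_iff, EReal.coe_toReal hct hcb]; exact hc1
  · rw [EReal.coe_toReal hct hcb]; exact hc2

lemma mem_nhds_domR {R : EReal} {x : ℝ} (hx : 0 < x) (hxR : (x : EReal) < R) :
    domR R ∈ nhds x := by
  obtain ⟨y, hxy, hyR⟩ := exists_real_between' hxR
  have hsub : Set.Ioo (0:ℝ) y ⊆ domR R := fun z hz =>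
    ⟨hz.1.le, lt_trans (EReal.coe_lt_coe_iff.2 hz.2) hyR⟩
  exact Filter.mem_of_superset (Ioo_mem_nhds hx hxy) hsub

lemma chain_eq {N : ℕ} {m α : ℝ} {f : ℝ → ℝ} {R : EReal} {u u' rr rr' rr'' : ℝ → ℝ}
    (h : IsRadialSolution N m f R u u') (hi : IsInvSol N m α f R u rr rr' rr'')
    {v : ℝ} (hv : v ∈ Set.Ioo 0 α) : u' (rr v) * rr' v = 1 := by
  obtain ⟨hr0, hrR, hur, hd, hd', hd2, -⟩ := hi.1 v hv
  have hmem : domR R ∈ nhds (rr v) := mem_nhds_domR hr0 hrR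
  have hu : HasDerivAt u (u' (rr v)) (rr v) :=
    (h.2.1 _ ⟨hr0.le, hrR⟩).hasDerivAt hmem
  have hcomp : HasDerivAt (u ∘ rr) (u' (rr v) * rr' v) v := hu.comp v hd
  have hev : (fun w => w) =ᶠ[nhds v] (u ∘ rr) := by
    filter_upwards [isOpen_Ioo.mem_nhds hv] with w hw
    exact ((hi.1 w hw).2.2.1).symm
  have hid : HasDerivAt (fun w : ℝ => w) (u' (rr v) * rr' v) v :=
    hcomp.congr_of_eventuallyEq hev
  have := (hasDerivAt_id v).unique hid
  linarith [this]

lemma rr_small {N : ℕ} {m α : ℝ} {f : ℝ → ℝ} {R : EReal} {u rr rr' rr'' : ℝ → ℝ}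
    (hR : 0 < R) (hα : 0 < α) (hi : IsInvSol N m α f R u rr rr' rr'')
    {η : ℝ} (hη : 0 < η) : ∃ v ∈ Set.Ioo 0 α, rr v < η := by
  obtain ⟨y, hy0, hyR⟩ := exists_real_between' (x := 0) hR
  set x := min (η / 2) y with hx
  have hx0 : 0 < x := lt_min (by linarith) hy0
  have hxR : (x : EReal) < R := lt_of_le_of_lt (EReal.coe_le_coe_iff.2 (min_le_right _ _)) hyR
  obtain ⟨v, hv, hrv⟩ := hi.2 x hx0 hxR
  exact ⟨v, hv, by rw [hrv]; exact lt_of_le_of_lt (min_le_left _ _) (by linarith)⟩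

lemma rr_tendsto {N : ℕ} {m α : ℝ} {f : ℝ → ℝ} {R : EReal} {u rr rr' rr'' : ℝ → ℝ}
    (hR : 0 < R) (hα : 0 < α) (hi : IsInvSol N m α f R u rr rr' rr'')
    (hanti : StrictAntiOn rr (Set.Ioo 0 α)) :
    Filter.Tendsto rr (nhdsWithin 0 (Set.Ioi 0)) (limR R) := by
  rw [limR, tendsto_comap_iff, tendsto_nhdsWithin_iff]
  constructor
  · rw [tendsto_order]
    constructor
    · intro c hc
      have hc' : max c 0 < R := max_lt hc hR
      obtain ⟨d, hd1, hd2⟩ := exists_between hc'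
      have hdt : d ≠ ⊤ := by intro hh; rw [hh] at hd2; exact not_top_lt hd2
      have hdb : d ≠ ⊥ := by
        intro hh; rw [hh] at hd1; exact not_lt_bot (lt_of_le_of_lt (le_max_right c 0) hd1)
      set x := d.toReal with hxd
      have hdx : (x : EReal) = d := EReal.coe_toReal hdt hdb
      have hx0 : 0 < x := by
        rw [← EReal.coe_lt_coe_iff, hdx]
        exact lt_of_le_of_lt (le_max_right c 0) hd1
      obtain ⟨v₀, hv₀, hrv₀⟩ := hi.2 x hx0 (by rw [hdx]; exact hd2)
      have hIoo : Set.Ioo (0:ℝ) v₀ ∈ nhdsWithin 0 (Set.Ioi 0) :=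
        Ioo_mem_nhdsGT_of_mem ⟨le_refl _, hv₀.1⟩
      filter_upwards [hIoo] with w hw
      have : rr v₀ < rr w := hanti ⟨hw.1, lt_trans hw.2 hv₀.2⟩ hv₀ hw.2
      calc c ≤ max c 0 := le_max_left c 0
        _ < d := hd1
        _ = (x : EReal) := hdx.symm
        _ < (rr w : EReal) := by rw [← hrv₀]; exact EReal.coe_lt_coe_iff.2 this
    · intro c hc
      filter_upwards [Ioo_mem_nhdsGT_of_mem (Set.left_mem_Ico.2 hα)] with w hw
      exact lt_trans (hi.1 w hw).2.1 hc
  · filter_upwards [Ioo_mem_nhdsGT_of_mem (Set.left_mem_Ico.2 hα)] with w hw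
    exact (hi.1 w hw).2.1

lemma alg_vm {N : ℕ} {m r r' r'' fu : ℝ} (hm : 1 < m)
    (hr : 0 < r) (hr' : r' < 0)
    (hode : (m - 1) * r'' = ((N : ℝ) - 1) * r' ^ 2 / r + fu * |r'| ^ m * r') :
    r'' / (-r') ^ 2 * m * ((-r')⁻¹) ^ (m - 1)
      = m / (m - 1) * (((N : ℝ) - 1) * ((-r')⁻¹) ^ (m - 1) / r - fu) := by
  have hp : 0 < -r' := by linarith
  have habs : |r'| = -r' := abs_of_neg hr'
  have hXpos : (0:ℝ) < (-r') ^ (m - 1) := Real.rpow_pos_of_pos hp _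
  have hinv : ((-r')⁻¹) ^ (m - 1) = ((-r') ^ (m - 1))⁻¹ := Real.inv_rpow hp.le _
  have hpm : (-r') ^ m = (-r') ^ (m - 1) * (-r') := by
    rw [← Real.rpow_add_one hp.ne' (m-1)]; ring_nf
  rw [habs, hpm] at hode
  rw [hinv]
  have hm1 : m - 1 ≠ 0 := by linarith
  have hr'' : r'' = (((N : ℝ) - 1) * r' ^ 2 / r - fu * ((-r') ^ (m-1)) * r' ^ 2) / (m - 1) := by
    field_simp at hode ⊢
    nlinarith [hode]
  rw [hr'']
  have h2 : (-r') ^ (2:ℕ) = r' ^ (2:ℕ) := by ring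
  rw [h2]
  have hr2 : (r':ℝ) ^ (2:ℕ) ≠ 0 := pow_ne_zero _ (ne_of_lt hr')
  have hr0 : r' ≠ 0 := ne_of_lt hr'
  field_simp

lemma alg_h {N n : ℕ} {m r r' r'' fu : ℝ} (hm : 1 < m)
    (hr : 0 < r) (hr' : r' < 0) (hn : n = N - 1) (hN : 2 ≤ N)
    (hode : (m - 1) * r'' = ((N : ℝ) - 1) * r' ^ 2 / r + fu * |r'| ^ m * r') :
    (↑n * r ^ (n - 1) * r') * ((-r')⁻¹) ^ (m - 1)
      + r ^ n * (r'' / (-r') ^ 2 * (m - 1) * ((-r')⁻¹) ^ (m - 1 - 1))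
      = r ^ n * fu * r' := by
  have hn1 : 1 ≤ n := by omega
  have hcast : ((N : ℝ) - 1) = (n : ℝ) := by
    subst hn
    push_cast [Nat.cast_sub (by omega : 1 ≤ N)]
    ring
  have hp : 0 < -r' := by linarith
  have habs : |r'| = -r' := abs_of_neg hr'
  have hYpos : (0:ℝ) < (-r') ^ (m - 1 - 1) := Real.rpow_pos_of_pos hp _
  have hinv1 : ((-r')⁻¹) ^ (m - 1) = ((-r') ^ (m - 1))⁻¹ := Real.inv_rpow hp.le _
  have hinv2 : ((-r')⁻¹) ^ (m - 1 - 1) = ((-r') ^ (m - 1 - 1))⁻¹ := Real.inv_rpow hp.le _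
  have hpm1 : (-r') ^ (m - 1) = (-r') ^ (m - 1 - 1) * (-r') := by
    rw [← Real.rpow_add_one hp.ne' (m - 1 - 1)]; ring_nf
  have hpm : (-r') ^ m = (-r') ^ (m - 1 - 1) * (-r') * (-r') := by
    rw [← hpm1, ← Real.rpow_add_one hp.ne' (m - 1)]; ring_nf
  have hrn : r ^ n = r ^ (n - 1) * r := by
    rw [← pow_succ]; congr 1; omega
  rw [habs, hpm, hcast] at hode
  rw [hinv1, hinv2, hpm1, hrn]
  have hm1 : m - 1 ≠ 0 := by linarith
  set Y : ℝ := (-r') ^ (m - 1 - 1) with hY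
  have hYne : Y ≠ 0 := ne_of_gt hYpos
  have hrne : r ≠ 0 := ne_of_gt hr
  have hr'ne : r' ≠ 0 := ne_of_lt hr'
  have hr'' : r'' = ((n : ℝ) * r' ^ 2 / r - fu * (Y * (-r')) * r' ^ 2) / (m - 1) := by
    field_simp at hode ⊢
    nlinarith [hode]
  rw [hr'']
  have h2 : (-r') ^ (2:ℕ) = r' ^ (2:ℕ) := by ring
  rw [h2]
  field_simp
  ring

lemma hasDerivAt_vm {N : ℕ} {m : ℝ} (hm : 1 < m) {rr rr' rr'' f : ℝ → ℝ} {v : ℝ}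
    (hr : 0 < rr v) (hd' : rr' v < 0) (hd2 : HasDerivAt rr' (rr'' v) v)
    (hode : (m - 1) * rr'' v = ((N : ℝ) - 1) * (rr' v) ^ 2 / rr v + f v * |rr' v| ^ m * rr' v) :
    HasDerivAt (fun w => ((-(rr' w))⁻¹) ^ m)
      (m / (m - 1) * (((N : ℝ) - 1) * ((-(rr' v))⁻¹) ^ (m - 1) / rr v - f v)) v := by
  have hp : 0 < -(rr' v) := by linarith
  have hinv : HasDerivAt (fun w => (-(rr' w))⁻¹) (rr'' v / (-(rr' v)) ^ 2) v := by
    have h0 : HasDerivAt (fun w => -(rr' w)) (-(rr'' v)) v := hd2.neg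
    have h1 := h0.inv (ne_of_gt hp)
    exact h1.congr_deriv (by ring)
  have h2 := hinv.rpow_const (p := m) (Or.inl (ne_of_gt (inv_pos.2 hp)))
  convert h2 using 1
  exact (alg_vm hm hr hd' hode).symm

lemma hasDerivAt_h {N n : ℕ} {m : ℝ} (hm : 1 < m) (hn : n = N - 1) (hN : 2 ≤ N)
    {rr rr' rr'' f : ℝ → ℝ} {v : ℝ}
    (hr : 0 < rr v) (hd : HasDerivAt rr (rr' v) v) (hd' : rr' v < 0)
    (hd2 : HasDerivAt rr' (rr'' v) v)
    (hode : (m - 1) * rr'' v = ((N : ℝ) - 1) * (rr' v) ^ 2 / rr v + f v * |rr' v| ^ m * rr' v) :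
    HasDerivAt (fun w => rr w ^ n * ((-(rr' w))⁻¹) ^ (m - 1))
      (rr v ^ n * f v * rr' v) v := by
  have hp : 0 < -(rr' v) := by linarith
  have hinv : HasDerivAt (fun w => (-(rr' w))⁻¹) (rr'' v / (-(rr' v)) ^ 2) v := by
    have h0 : HasDerivAt (fun w => -(rr' w)) (-(rr'' v)) v := hd2.neg
    have h1 := h0.inv (ne_of_gt hp)
    exact h1.congr_deriv (by ring)
  have h2 := hinv.rpow_const (p := m - 1) (Or.inl (ne_of_gt (inv_pos.2 hp)))
  have h3 := hd.pow n
  have h4 := h3.mul h2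
  exact h4.congr_deriv (by rw [Pi.pow_apply]; exact alg_h hm hr hd' hn hN hode)

lemma strictAntiOn_Ioo_of_hasDerivAt {F F' : ℝ → ℝ} {a c : ℝ}
    (hd : ∀ u ∈ Set.Ioo a c, HasDerivAt F (F' u) u)
    (hneg : ∀ u ∈ Set.Ioo a c, F' u < 0) : StrictAntiOn F (Set.Ioo a c) := by
  apply strictAntiOn_of_deriv_neg (convex_Ioo a c)
  · exact fun u hu => (hd u hu).continuousAt.continuousWithinAt
  · rw [interior_Ioo]; intro u hu; rw [(hd u hu).deriv]; exact hneg u hu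

lemma antitoneOn_Ioc_of_hasDerivAt {F F' : ℝ → ℝ} {a c : ℝ}
    (hd : ∀ u ∈ Set.Ioc a c, HasDerivAt F (F' u) u)
    (hle : ∀ u ∈ Set.Ioo a c, F' u ≤ 0) : AntitoneOn F (Set.Ioc a c) := by
  apply antitoneOn_of_deriv_nonpos (convex_Ioc a c)
  · exact fun u hu => (hd u hu).continuousAt.continuousWithinAt
  · rw [interior_Ioc]
    exact fun u hu => ((hd u (Set.Ioo_subset_Ioc_self hu)).differentiableAt).differentiableWithinAt
  · rw [interior_Ioc]
    intro u hu
    rw [(hd u (Set.Ioo_subset_Ioc_self hu)).deriv]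
    exact hle u hu

lemma monotoneOn_Ioc_of_hasDerivAt {F F' : ℝ → ℝ} {a c : ℝ}
    (hd : ∀ u ∈ Set.Ioc a c, HasDerivAt F (F' u) u)
    (hle : ∀ u ∈ Set.Ioo a c, 0 ≤ F' u) : MonotoneOn F (Set.Ioc a c) := by
  apply monotoneOn_of_deriv_nonneg (convex_Ioc a c)
  · exact fun u hu => (hd u hu).continuousAt.continuousWithinAt
  · rw [interior_Ioc]
    exact fun u hu => ((hd u (Set.Ioo_subset_Ioc_self hu)).differentiableAt).differentiableWithinAt
  · rw [interior_Ioc]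
    intro u hu
    rw [(hd u (Set.Ioo_subset_Ioc_self hu)).deriv]
    exact hle u hu

end Stmt17Helpers

set_option maxHeartbeats 1000000

/-- with `f` locally Lipschitz on `(b,∞)` and two distinct radial solutions
with `b < α₁ < α₂`, the function `t = r₁ - r₂` has at least one zero in `(0, α₁)`. -/
theorem stmt17 (N : ℕ) (m b : ℝ) (f : ℝ → ℝ) (hm : 1 < m)
    (hN2 : 2 ≤ N) (hNm : (N : ℝ) ≤ m) (hf : H1cond b f)
    (hLip : ∀ x : ℝ, b < x → ∃ K : NNReal, ∃ ε : ℝ, 0 < ε ∧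
      LipschitzOnWith K f (Set.Ioi b ∩ Metric.ball x ε))
    (R₁ R₂ : EReal) (u₁ u₁' u₂ u₂' r₁ r₁' r₁'' r₂ r₂' r₂'' : ℝ → ℝ)
    (h₁ : IsRadialSolution N m f R₁ u₁ u₁')
    (h₂ : IsRadialSolution N m f R₂ u₂ u₂')
    (hne : ¬ (R₁ = R₂ ∧ ∀ r ∈ domR R₁, u₁ r = u₂ r))
    (hb : b < u₁ 0) (h12 : u₁ 0 < u₂ 0)
    (hi₁ : IsInvSol N m (u₁ 0) f R₁ u₁ r₁ r₁' r₁'')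
    (hi₂ : IsInvSol N m (u₂ 0) f R₂ u₂ r₂ r₂' r₂'') :
    ∃ v : ℝ, 0 < v ∧ v < u₁ 0 ∧ r₁ v = r₂ v := by
  obtain ⟨hbpos, hfc, hfnp, hfpos⟩ := hf
  set A : ℝ := u₁ 0 with hA
  set A2 : ℝ := u₂ 0 with hA2
  have hα₁pos : 0 < A := lt_trans hbpos hb
  have hα₂pos : 0 < A2 := lt_trans hα₁pos h12
  have hsub12 : Set.Ioo (0:ℝ) A ⊆ Set.Ioo (0:ℝ) A2 := Set.Ioo_subset_Ioo le_rfl h12.le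
  have hb1 : b ∈ Set.Ioo (0:ℝ) A := ⟨hbpos, hb⟩
  have hα₁2 : A ∈ Set.Ioo (0:ℝ) A2 := ⟨hα₁pos, h12⟩
  have hR₁pos : 0 < R₁ := h₁.1
  have hR₂pos : 0 < R₂ := h₂.1
  have hp₁ := hi₁.1
  have hp₂ := hi₂.1
  have hm1 : (0:ℝ) < m - 1 := by linarith
  have hm0 : (0:ℝ) < m := by linarith
  have hN1 : (1:ℝ) ≤ (N:ℝ) - 1 := by
    have : (2:ℝ) ≤ (N:ℝ) := by exact_mod_cast hN2
    linarith
  -- strict antitonicity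
  have anti₁ : StrictAntiOn r₁ (Set.Ioo 0 A) :=
    strictAntiOn_Ioo_of_hasDerivAt (fun u hu => (hp₁ u hu).2.2.2.1)
      (fun u hu => (hp₁ u hu).2.2.2.2.1)
  have anti₂ : StrictAntiOn r₂ (Set.Ioo 0 A2) :=
    strictAntiOn_Ioo_of_hasDerivAt (fun u hu => (hp₂ u hu).2.2.2.1)
      (fun u hu => (hp₂ u hu).2.2.2.2.1)
  have hchain₁ : ∀ v ∈ Set.Ioo (0:ℝ) A, u₁' (r₁ v) * r₁' v = 1 :=
    fun v hv => chain_eq h₁ hi₁ hv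
  have hchain₂ : ∀ v ∈ Set.Ioo (0:ℝ) A2, u₂' (r₂ v) * r₂' v = 1 :=
    fun v hv => chain_eq h₂ hi₂ hv
  by_contra hcon
  push_neg at hcon
  -- Step 1: r₁ < r₂ on (0, A)
  have hA1r2 : 0 < r₂ A := (hp₂ A hα₁2).1
  have hlt : ∀ v ∈ Set.Ioo (0:ℝ) A, r₁ v < r₂ v := by
    intro v hv
    rcases lt_trichotomy (r₁ v) (r₂ v) with h | h | h
    · exact h
    · exact absurd h (hcon v hv.1 hv.2)
    · exfalso
      obtain ⟨w, hw, hrw⟩ := rr_small hR₁pos hα₁pos hi₁ hA1r2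
      have h2w : r₂ A < r₂ w := anti₂ (hsub12 hw) hα₁2 hw.2
      have hIcc : Set.uIcc w v ⊆ Set.Ioo (0:ℝ) A :=
        Set.ordConnected_Ioo.uIcc_subset hw hv
      have hcont : ContinuousOn (fun u => r₁ u - r₂ u) (Set.uIcc w v) := by
        intro u hu
        exact (((hp₁ u (hIcc hu)).2.2.2.1).sub
          ((hp₂ u (hsub12 (hIcc hu))).2.2.2.1)).continuousAt.continuousWithinAt
      have h0mem : (0:ℝ) ∈ Set.uIcc ((fun u => r₁ u - r₂ u) w) ((fun u => r₁ u - r₂ u) v) := by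
        rw [Set.mem_uIcc]
        left
        constructor <;> simp only [] <;> linarith
      obtain ⟨z, hz, hz0⟩ := intermediate_value_uIcc hcont h0mem
      exact hcon z (hIcc hz).1 (hIcc hz).2 (sub_eq_zero.1 hz0)
  -- Step 2: r₁' < r₂' on (0, A)
  have ht' : ∀ v ∈ Set.Ioo (0:ℝ) A, r₁' v < r₂' v := by
    have htc : ∀ v ∈ Set.Ioo (0:ℝ) A, ContinuousAt (fun u => r₁' u - r₂' u) v := by
      intro v hv
      exact ((hp₁ v hv).2.2.2.2.2.1.continuousAt).sub
        ((hp₂ v (hsub12 hv)).2.2.2.2.2.1.continuousAt)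
    -- near A, t' < 0
    have hnear : ∃ w₀ ∈ Set.Ioo (0:ℝ) A, ∀ u ∈ Set.Ioo w₀ A, r₁' u < r₂' u := by
      set B : ℝ := 1 - r₂' A with hBdef
      have hd'A : r₂' A < 0 := (hp₂ A hα₁2).2.2.2.2.1
      have hBpos : 0 < B := by simp only [hBdef]; linarith
      have hc2 : ContinuousAt r₂' A := (hp₂ A hα₁2).2.2.2.2.2.1.continuousAt
      have hev1 : ∀ᶠ u in nhds A, r₂' A - 1 < r₂' u :=
        hc2.eventually (eventually_gt_nhds (by linarith))
      set ε' : ℝ := (B + 1)⁻¹ with hε'def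
      have hε'pos : 0 < ε' := by positivity
      have hcu : ContinuousWithinAt u₁' (domR R₁) 0 := h₁.2.2.1 0 ⟨le_refl 0, hR₁pos⟩
      have h0' : u₁' 0 = 0 := h₁.2.2.2.2.1
      have hev2 : ∀ᶠ r in nhdsWithin 0 (domR R₁), -ε' < u₁' r := by
        have hgt : ∀ᶠ y in nhds (u₁' 0), -ε' < y := by
          rw [h0']; exact eventually_gt_nhds (by linarith)
        exact hcu.eventually hgt
      obtain ⟨η, hηpos, hηsub⟩ := Metric.mem_nhdsWithin_iff.1 (Filter.eventually_iff.1 hev2)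
      obtain ⟨v₀, hv₀, hrv₀⟩ := rr_small hR₁pos hα₁pos hi₁ hηpos
      have hev1' : ∀ᶠ u in nhdsWithin A (Set.Iio A), r₂' A - 1 < r₂' u :=
        hev1.filter_mono nhdsWithin_le_nhds
      have hIoo : Set.Ioo v₀ A ∈ nhdsWithin A (Set.Iio A) :=
        Ioo_mem_nhdsLT_of_mem ⟨hv₀.2, le_refl A⟩
      have hcomb : ∀ᶠ u in nhdsWithin A (Set.Iio A),
          (r₂' A - 1 < r₂' u) ∧ u ∈ Set.Ioo v₀ A :=
        hev1'.and (Filter.eventually_iff.2 hIoo)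
      obtain ⟨l, hl, hlsub⟩ := mem_nhdsLT_iff_exists_Ioo_subset.1 hcomb
      refine ⟨max l v₀, ⟨lt_of_lt_of_le hv₀.1 (le_max_right l v₀), max_lt hl hv₀.2⟩, ?_⟩
      intro u hu
      have hu' : u ∈ Set.Ioo l A := ⟨lt_of_le_of_lt (le_max_left l v₀) hu.1, hu.2⟩
      obtain ⟨h2b, huv₀⟩ := hlsub hu'
      have huA : u ∈ Set.Ioo (0:ℝ) A := ⟨lt_trans hv₀.1 huv₀.1, hu.2⟩
      have hr1u : r₁ u < η := lt_trans (anti₁ hv₀ huA huv₀.1) hrv₀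
      have hr1upos : 0 < r₁ u := (hp₁ u huA).1
      have hy : -ε' < u₁' (r₁ u) := by
        apply hηsub
        constructor
        · rw [Metric.mem_ball, Real.dist_eq]
          rw [sub_zero, abs_of_pos hr1upos]
          exact hr1u
        · exact ⟨hr1upos.le, (hp₁ u huA).2.1⟩
      have hchainu := hchain₁ u huA
      have hd'u : r₁' u < 0 := (hp₁ u huA).2.2.2.2.1
      have hyneg : u₁' (r₁ u) < 0 := by nlinarith [hchainu, hd'u]
      have h3 : 1 < ε' * (-(r₁' u)) := by nlinarith [hchainu, hy, hd'u]
      have h6 : (1:ℝ)/ε' = B + 1 := by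
        rw [hε'def]; field_simp
      have h5 : (1:ℝ)/ε' < -(r₁' u) := by
        rw [div_lt_iff₀ hε'pos]
        nlinarith [h3]
      have h7 : r₂' A - 1 = -B := by simp only [hBdef]; ring
      linarith
    -- the zero-set argument
    intro v hv
    by_contra hge
    push_neg at hge
    obtain ⟨w₀, hw₀, hw₀neg⟩ := hnear
    set w : ℝ := (max v w₀ + A) / 2 with hwdef
    have hmax : max v w₀ < A := max_lt hv.2 hw₀.2
    have hwmem : w ∈ Set.Ioo (max v w₀) A :=
      ⟨by simp only [hwdef]; linarith, by simp only [hwdef]; linarith⟩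
    have hwA : w ∈ Set.Ioo (0:ℝ) A :=
      ⟨lt_trans (lt_of_lt_of_le hv.1 (le_max_left v w₀)) hwmem.1, hwmem.2⟩
    have hw0w : w ∈ Set.Ioo w₀ A := ⟨lt_of_le_of_lt (le_max_right v w₀) hwmem.1, hwmem.2⟩
    have htw : r₁' w < r₂' w := hw₀neg w hw0w
    have hvw : v < w := lt_of_le_of_lt (le_max_left v w₀) hwmem.1
    set Z : Set ℝ := {z | z ∈ Set.Icc v w ∧ 0 ≤ r₁' z - r₂' z} with hZdef
    have hZne : Z.Nonempty := ⟨v, ⟨le_refl v, hvw.le⟩, by linarith⟩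
    have hZbdd : BddAbove Z := ⟨w, fun z hz => hz.1.2⟩
    set s := sSup Z with hsdef
    have hs_cl : s ∈ closure Z := csSup_mem_closure hZne hZbdd
    have hZsub : Z ⊆ Set.Icc v w := fun z hz => hz.1
    have hsIcc : s ∈ Set.Icc v w := isClosed_Icc.closure_subset ((closure_mono hZsub) hs_cl)
    have hsA : s ∈ Set.Ioo (0:ℝ) A := ⟨lt_of_lt_of_le hv.1 hsIcc.1, lt_of_le_of_lt hsIcc.2 hwA.2⟩
    have hconts : ContinuousAt (fun u => r₁' u - r₂' u) s := htc s hsA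
    have hts_ge : 0 ≤ r₁' s - r₂' s := by
      have hmc : (fun u => r₁' u - r₂' u) s ∈ closure ((fun u => r₁' u - r₂' u) '' Z) :=
        mem_closure_image hconts hs_cl
      have himg : ((fun u => r₁' u - r₂' u) '' Z) ⊆ Set.Ici 0 := by
        rintro y ⟨z, hz, rfl⟩; exact hz.2
      exact isClosed_Ici.closure_subset ((closure_mono himg) hmc)
    have hsw : s < w := by
      rcases lt_or_eq_of_le hsIcc.2 with hcase | hcase
      · exact hcase
      · exfalso; rw [hcase] at hts_ge; linarith
    have hIocneg : ∀ z ∈ Set.Ioc s w, r₁' z - r₂' z < 0 := by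
      intro z hz
      by_contra hzge
      push_neg at hzge
      have hzZ : z ∈ Z := ⟨⟨le_trans hsIcc.1 hz.1.le, hz.2⟩, hzge⟩
      exact absurd (le_csSup hZbdd hzZ) (not_le.2 hz.1)
    have hts_le : r₁' s - r₂' s ≤ 0 := by
      have htnd : Filter.Tendsto (fun u => r₁' u - r₂' u) (nhdsWithin s (Set.Ioi s))
          (nhds (r₁' s - r₂' s)) := (hconts.tendsto).mono_left nhdsWithin_le_nhds
      apply le_of_tendsto htnd
      filter_upwards [Ioc_mem_nhdsGT_of_mem (Set.left_mem_Ico.2 hsw)] with z hz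
      exact (hIocneg z hz).le
    have hts0 : r₁' s = r₂' s := by linarith
    have hode₁ := (hp₁ s hsA).2.2.2.2.2.2
    have hode₂ := (hp₂ s (hsub12 hsA)).2.2.2.2.2.2
    have hr1s : 0 < r₁ s := (hp₁ s hsA).1
    have hr2s : 0 < r₂ s := (hp₂ s (hsub12 hsA)).1
    have hrlts : r₁ s < r₂ s := hlt s hsA
    have hd's : r₁' s < 0 := (hp₁ s hsA).2.2.2.2.1
    have htt : 0 < r₁'' s - r₂'' s := by
      rw [← hts0] at hode₂
      have hsq : 0 < (r₁' s)^2 := by nlinarith [hd's]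
      have heq1 : (m-1) * (r₁'' s - r₂'' s)
          = ((N:ℝ)-1) * (r₁' s)^2 / r₁ s - ((N:ℝ)-1) * (r₁' s)^2 / r₂ s := by
        linarith [hode₁, hode₂]
      have hlt2 : ((N:ℝ)-1) * (r₁' s)^2 / r₂ s < ((N:ℝ)-1) * (r₁' s)^2 / r₁ s := by
        apply div_lt_div_of_pos_left ?_ hr1s hrlts
        exact mul_pos (by linarith) hsq
      nlinarith [heq1, hlt2, hm1]
    have hdt' : HasDerivAt (fun u => r₁' u - r₂' u) (r₁'' s - r₂'' s) s :=
      ((hp₁ s hsA).2.2.2.2.2.1).sub ((hp₂ s (hsub12 hsA)).2.2.2.2.2.1)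
    have hslope := hasDerivAt_iff_tendsto_slope.1 hdt'
    have hev : ∀ᶠ z in nhdsWithin s {s}ᶜ, 0 < slope (fun u => r₁' u - r₂' u) s z :=
      hslope.eventually (eventually_gt_nhds htt)
    have hev' : ∀ᶠ z in nhdsWithin s (Set.Ioi s), 0 < slope (fun u => r₁' u - r₂' u) s z :=
      hev.filter_mono (nhdsWithin_mono s (fun z hz => Set.mem_compl_singleton_iff.2 (ne_of_gt hz)))
    have hmem : Set.Ioo s w ∈ nhdsWithin s (Set.Ioi s) :=
      Ioo_mem_nhdsGT_of_mem (Set.left_mem_Ico.2 hsw)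
    obtain ⟨z, hz1, hz2⟩ := (hev'.and (Filter.eventually_iff.2 hmem)).exists
    have hzs : s < z := hz2.1
    have hx : 0 < (r₁' z - r₂' z) - (r₁' s - r₂' s) := by
      have hsl : slope (fun u => r₁' u - r₂' u) s z
          = ((r₁' z - r₂' z) - (r₁' s - r₂' s)) / (z - s) := by
        rw [slope_def_field]
      rw [hsl] at hz1
      have hz0 : z - s ≠ 0 := ne_of_gt (sub_pos.2 hzs)
      have := mul_pos hz1 (sub_pos.2 hzs)
      rwa [div_mul_cancel₀ _ hz0] at this
    have hzneg := hIocneg z ⟨hzs, hz2.2.le⟩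
    linarith
  -- derived quantities
  have hVpos₁ : ∀ v ∈ Set.Ioo (0:ℝ) A, 0 < (-(r₁' v))⁻¹ := by
    intro v hv
    have := (hp₁ v hv).2.2.2.2.1
    exact inv_pos.2 (by linarith)
  have hVpos₂ : ∀ v ∈ Set.Ioo (0:ℝ) A2, 0 < (-(r₂' v))⁻¹ := by
    intro v hv
    have := (hp₂ v hv).2.2.2.2.1
    exact inv_pos.2 (by linarith)
  have hVlt : ∀ v ∈ Set.Ioo (0:ℝ) A, (-(r₁' v))⁻¹ < (-(r₂' v))⁻¹ := by
    intro v hv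
    have h1 := (hp₁ v hv).2.2.2.2.1
    have h2 := (hp₂ v (hsub12 hv)).2.2.2.2.1
    have h3 := ht' v hv
    exact inv_strictAnti₀ (by linarith) (by linarith)
  set c₁ : ℝ := m * ((N:ℝ) - 1) / (m - 1) with hc₁def
  have hc₁pos : 0 < c₁ := div_pos (mul_pos hm0 (by linarith)) hm1
  set G : ℝ → ℝ := fun w => ((-(r₂' w))⁻¹) ^ m - ((-(r₁' w))⁻¹) ^ m with hGdef
  have hGpos : ∀ v ∈ Set.Ioo (0:ℝ) A, 0 < G v := by
    intro v hv
    have := Real.rpow_lt_rpow (hVpos₁ v hv).le (hVlt v hv) hm0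
    simp only [hGdef]
    linarith
  set Dv : ℝ → ℝ := fun v => m / (m - 1) * (((N : ℝ) - 1) * ((-(r₂' v))⁻¹) ^ (m - 1) / r₂ v - f v)
      - m / (m - 1) * (((N : ℝ) - 1) * ((-(r₁' v))⁻¹) ^ (m - 1) / r₁ v - f v) with hDvdef
  have hGd : ∀ v ∈ Set.Ioo (0:ℝ) A, HasDerivAt G (Dv v) v := by
    intro v hv
    have hv2 := hsub12 hv
    have d2 := hasDerivAt_vm (N := N) hm (hp₂ v hv2).1 (hp₂ v hv2).2.2.2.2.1
      (hp₂ v hv2).2.2.2.2.2.1 (hp₂ v hv2).2.2.2.2.2.2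
    have d1 := hasDerivAt_vm (N := N) hm (hp₁ v hv).1 (hp₁ v hv).2.2.2.2.1
      (hp₁ v hv).2.2.2.2.2.1 (hp₁ v hv).2.2.2.2.2.2
    exact d2.sub d1
  -- the crucial differential inequality
  have hGd_le : ∀ v ∈ Set.Ioo (0:ℝ) A, Dv v ≤ c₁ * G v * (-(r₁' v)) / r₂ v := by
    intro v hv
    have hv2 := hsub12 hv
    set a := (-(r₂' v))⁻¹ with hadef
    set e := (-(r₁' v))⁻¹ with hedef
    have hapos : 0 < a := hVpos₂ v hv2
    have hepos : 0 < e := hVpos₁ v hv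
    have hea : e < a := hVlt v hv
    have hr₁pos : 0 < r₁ v := (hp₁ v hv).1
    have hr₂pos : 0 < r₂ v := (hp₂ v hv2).1
    have hrlt : r₁ v < r₂ v := hlt v hv
    have hae : e ^ (m-1) ≤ a ^ (m-1) :=
      Real.rpow_le_rpow hepos.le hea.le (by linarith)
    have hepow : 0 < e ^ (m-1) := Real.rpow_pos_of_pos hepos _
    have hapow : 0 < a ^ (m-1) := Real.rpow_pos_of_pos hapos _
    have hDv : Dv v = c₁ * (a ^ (m-1) / r₂ v - e ^ (m-1) / r₁ v) := by
      simp only [hDvdef, hc₁def, ← hadef, ← hedef]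
      ring
    -- key: a^{m-1} - e^{m-1} ≤ G v / e  i.e. e*(a^{m-1}-e^{m-1}) ≤ G v
    have hkey : e * (a ^ (m-1) - e ^ (m-1)) ≤ G v := by
      have h1 : e * a ^ (m-1) ≤ a * a ^ (m-1) :=
        mul_le_mul_of_nonneg_right hea.le hapow.le
      have h2 : a ^ m = a ^ (m-1) * a := by
        rw [← Real.rpow_add_one hapos.ne' (m-1)]
        ring_nf
      have h3 : e ^ m = e ^ (m-1) * e := by
        rw [← Real.rpow_add_one hepos.ne' (m-1)]
        ring_nf
      simp only [hGdef, ← hadef, ← hedef]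
      nlinarith [h1, h2, h3]
    have he' : e⁻¹ = -(r₁' v) := by rw [hedef, inv_inv]
    -- combine
    have hstep1 : a ^ (m-1) / r₂ v - e ^ (m-1) / r₁ v ≤ (a ^ (m-1) - e ^ (m-1)) / r₂ v := by
      have : e ^ (m-1) / r₂ v ≤ e ^ (m-1) / r₁ v :=
        div_le_div_of_nonneg_left hepow.le hr₁pos hrlt.le
      have hsplit : (a ^ (m-1) - e ^ (m-1)) / r₂ v
          = a ^ (m-1) / r₂ v - e ^ (m-1) / r₂ v := by ring
      rw [hsplit]
      linarith
    have hstep2 : (a ^ (m-1) - e ^ (m-1)) / r₂ v ≤ (G v * e⁻¹) / r₂ v := by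
      apply div_le_div_of_nonneg_right ?_ hr₂pos.le
      · rw [← he'] at *
        calc a ^ (m-1) - e ^ (m-1) = e⁻¹ * (e * (a ^ (m-1) - e ^ (m-1))) := by
              field_simp
          _ ≤ e⁻¹ * G v := by
              apply mul_le_mul_of_nonneg_left hkey (by positivity)
          _ = G v * e⁻¹ := by ring
    rw [hDv, he'] at *
    calc c₁ * (a ^ (m-1) / r₂ v - e ^ (m-1) / r₁ v)
        ≤ c₁ * ((G v * (-(r₁' v))) / r₂ v) := by
          apply mul_le_mul_of_nonneg_left ?_ hc₁pos.le
          exact le_trans hstep1 hstep2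
      _ = c₁ * G v * (-(r₁' v)) / r₂ v := by ring
  have h2gen : ∀ c Gz x r : ℝ, Gz ≠ 0 → (c * Gz * x / r) / Gz = c * x / r := by
    intro c Gz x r hGz0
    rw [div_div, mul_comm r Gz, show c * Gz * x = Gz * (c * x) by ring,
      mul_div_mul_left _ _ hGz0]
  -- case split on R₁
  rcases eq_or_ne R₁ ⊤ with hR₁top | hR₁top
  · -- R₁ = ∞ : case 5
    set n : ℕ := N - 1 with hndef
    have hncast : ((N:ℝ) - 1) = (n:ℝ) := by
      rw [hndef]
      push_cast [Nat.cast_sub (by omega : 1 ≤ N)]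
      ring
    set H : ℝ → ℝ := fun y => r₂ y ^ n * ((-(r₂' y))⁻¹) ^ (m-1) with hHdef
    have hHd : ∀ z ∈ Set.Ioc (0:ℝ) b, HasDerivAt H (r₂ z ^ n * f z * r₂' z) z := by
      intro z hz
      have hz2 : z ∈ Set.Ioo (0:ℝ) A2 := hsub12 ⟨hz.1, lt_of_le_of_lt hz.2 hb⟩
      exact hasDerivAt_h hm hndef hN2 (hp₂ z hz2).1 (hp₂ z hz2).2.2.2.1
        (hp₂ z hz2).2.2.2.2.1 (hp₂ z hz2).2.2.2.2.2.1 (hp₂ z hz2).2.2.2.2.2.2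
    have hHmono : MonotoneOn H (Set.Ioc 0 b) := by
      apply monotoneOn_Ioc_of_hasDerivAt hHd
      intro z hz
      have hz2 : z ∈ Set.Ioo (0:ℝ) A2 := hsub12 ⟨hz.1, lt_trans hz.2 hb⟩
      have hfz : f z ≤ 0 := hfnp z hz.1 hz.2.le
      have hd'z : r₂' z < 0 := (hp₂ z hz2).2.2.2.2.1
      have hfr : 0 ≤ f z * r₂' z := by nlinarith [hfz, hd'z.le]
      have hpow : 0 ≤ r₂ z ^ n := pow_nonneg (hp₂ z hz2).1.le n
      calc (0:ℝ) ≤ r₂ z ^ n * (f z * r₂' z) := mul_nonneg hpow hfr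
        _ = r₂ z ^ n * f z * r₂' z := by ring
    have hr₂bpos : 0 < r₂ b := (hp₂ b (hsub12 hb1)).1
    set M : ℝ := H b with hMdef
    have hMpos : 0 < M := by
      have h1 : 0 < r₂ b ^ n := pow_pos hr₂bpos n
      have h2 : 0 < ((-(r₂' b))⁻¹) ^ (m-1) :=
        Real.rpow_pos_of_pos (hVpos₂ b (hsub12 hb1)) _
      exact mul_pos h1 h2
    set q : ℝ := m / (m - 1) with hqdef
    have hqpos : 0 < q := div_pos hm0 hm1
    set κ : ℝ := (n:ℝ) * q with hκdef
    have hnpos : 0 < (n:ℝ) := by rw [← hncast]; linarith [hN1]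
    have hκpos : 0 < κ := mul_pos hnpos hqpos
    have hc₁κ : c₁ = κ := by
      rw [hc₁def, hκdef, hqdef, ← hncast]; ring
    have hupper : ∀ z ∈ Set.Ioc (0:ℝ) b, ((-(r₂' z))⁻¹) ^ m ≤ M ^ q * r₁ z ^ (-κ) := by
      intro z hz
      have hzA : z ∈ Set.Ioo (0:ℝ) A := ⟨hz.1, lt_of_le_of_lt hz.2 hb⟩
      have hz2 : z ∈ Set.Ioo (0:ℝ) A2 := hsub12 hzA
      have hV : 0 < (-(r₂' z))⁻¹ := hVpos₂ z hz2
      have hr₁z : 0 < r₁ z := (hp₁ z hzA).1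
      have hr₂z : 0 < r₂ z := (hp₂ z hz2).1
      have hrlt : r₁ z < r₂ z := hlt z hzA
      have hHz : H z ≤ M := hHmono hz ⟨hbpos, le_refl b⟩ hz.2
      have hVm1 : ((-(r₂' z))⁻¹) ^ (m-1) ≤ M / r₁ z ^ n := by
        have h1 : r₁ z ^ n ≤ r₂ z ^ n := pow_le_pow_left₀ hr₁z.le hrlt.le n
        have hHz' : r₂ z ^ n * ((-(r₂' z))⁻¹) ^ (m-1) ≤ M := hHz
        rw [le_div_iff₀ (pow_pos hr₁z n)]
        calc ((-(r₂' z))⁻¹) ^ (m-1) * r₁ z ^ n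
            ≤ ((-(r₂' z))⁻¹) ^ (m-1) * r₂ z ^ n :=
              mul_le_mul_of_nonneg_left h1 (Real.rpow_pos_of_pos hV _).le
          _ = r₂ z ^ n * ((-(r₂' z))⁻¹) ^ (m-1) := by ring
          _ ≤ M := hHz'
      have hVm : ((-(r₂' z))⁻¹) ^ m = (((-(r₂' z))⁻¹) ^ (m-1)) ^ q := by
        rw [← Real.rpow_mul hV.le]
        congr 1
        rw [hqdef]
        field_simp
      rw [hVm]
      have h2 : (((-(r₂' z))⁻¹) ^ (m-1)) ^ q ≤ (M / r₁ z ^ n) ^ q :=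
        Real.rpow_le_rpow (Real.rpow_pos_of_pos hV _).le hVm1 hqpos.le
      refine le_trans h2 (le_of_eq ?_)
      rw [Real.div_rpow hMpos.le (pow_nonneg hr₁z.le n),
        ← Real.rpow_natCast (r₁ z) n, ← Real.rpow_mul hr₁z.le,
        Real.rpow_neg hr₁z.le, hκdef, div_eq_mul_inv]
    set Ψ : ℝ → ℝ := fun y => Real.log (G y) + κ * Real.log (r₁ y) with hΨdef
    have hΨd : ∀ z ∈ Set.Ioc (0:ℝ) b, HasDerivAt Ψ (Dv z / G z + κ * (r₁' z / r₁ z)) z := by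
      intro z hz
      have hzA : z ∈ Set.Ioo (0:ℝ) A := ⟨hz.1, lt_of_le_of_lt hz.2 hb⟩
      exact ((hGd z hzA).log (ne_of_gt (hGpos z hzA))).add
        ((((hp₁ z hzA).2.2.2.1).log (ne_of_gt (hp₁ z hzA).1)).const_mul κ)
    have hΨanti : AntitoneOn Ψ (Set.Ioc 0 b) := by
      apply antitoneOn_Ioc_of_hasDerivAt hΨd
      intro z hz
      have hzA : z ∈ Set.Ioo (0:ℝ) A := ⟨hz.1, lt_trans hz.2 hb⟩
      have hGz := hGpos z hzA
      have hd'z : r₁' z < 0 := (hp₁ z hzA).2.2.2.2.1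
      have hr₁z : 0 < r₁ z := (hp₁ z hzA).1
      have hr₂z : 0 < r₂ z := (hp₂ z (hsub12 hzA)).1
      have hrlt : r₁ z < r₂ z := hlt z hzA
      have hbound := hGd_le z hzA
      have h1 : Dv z / G z ≤ (c₁ * G z * (-(r₁' z)) / r₂ z) / G z :=
        div_le_div_of_nonneg_right hbound hGz.le
      have h2 : (c₁ * G z * (-(r₁' z)) / r₂ z) / G z = c₁ * (-(r₁' z)) / r₂ z :=
        h2gen c₁ (G z) _ _ (ne_of_gt hGz)
      have h3 : c₁ * (-(r₁' z)) / r₂ z ≤ c₁ * (-(r₁' z)) / r₁ z :=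
        div_le_div_of_nonneg_left (by nlinarith [hc₁pos, hd'z]) hr₁z hrlt.le
      have h4 : c₁ * (-(r₁' z)) / r₁ z = -(κ * (r₁' z / r₁ z)) := by
        rw [hc₁κ]; ring
      have h5 : Dv z / G z ≤ -(κ * (r₁' z / r₁ z)) := by
        rw [← h4]
        calc Dv z / G z ≤ (c₁ * G z * (-(r₁' z)) / r₂ z) / G z := h1
          _ = c₁ * (-(r₁' z)) / r₂ z := h2
          _ ≤ c₁ * (-(r₁' z)) / r₁ z := h3
      linarith
    have hGb := hGpos b hb1
    have hr₁b : 0 < r₁ b := (hp₁ b hb1).1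
    set δ₂ : ℝ := G b * r₁ b ^ κ with hδ₂def
    have hδ₂pos : 0 < δ₂ := mul_pos hGb (Real.rpow_pos_of_pos hr₁b κ)
    have hlow : ∀ z ∈ Set.Ioc (0:ℝ) b, δ₂ * r₁ z ^ (-κ) ≤ G z := by
      intro z hz
      have hzA : z ∈ Set.Ioo (0:ℝ) A := ⟨hz.1, lt_of_le_of_lt hz.2 hb⟩
      have hr₁z : 0 < r₁ z := (hp₁ z hzA).1
      have hmono : Ψ b ≤ Ψ z := hΨanti hz ⟨hbpos, le_refl b⟩ hz.2
      have h1 : Real.log (G b) + κ * Real.log (r₁ b)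
          ≤ Real.log (G z) + κ * Real.log (r₁ z) := hmono
      have h2 : Real.log (δ₂ * r₁ z ^ (-κ)) ≤ Real.log (G z) := by
        rw [Real.log_mul (ne_of_gt hδ₂pos) (ne_of_gt (Real.rpow_pos_of_pos hr₁z _)),
          hδ₂def, Real.log_mul (ne_of_gt hGb) (ne_of_gt (Real.rpow_pos_of_pos hr₁b _)),
          Real.log_rpow hr₁b, Real.log_rpow hr₁z]
        linarith
      calc δ₂ * r₁ z ^ (-κ) = Real.exp (Real.log (δ₂ * r₁ z ^ (-κ))) :=
            (Real.exp_log (mul_pos hδ₂pos (Real.rpow_pos_of_pos hr₁z _))).symm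
        _ ≤ Real.exp (Real.log (G z)) := Real.exp_le_exp.2 h2
        _ = G z := Real.exp_log (hGpos z hzA)
    set Mq : ℝ := M ^ q with hMqdef
    have hMqpos : 0 < Mq := Real.rpow_pos_of_pos hMpos q
    have hδ₂Mq : δ₂ ≤ Mq := by
      have h1 : G b ≤ ((-(r₂' b))⁻¹) ^ m := by
        have hpos := Real.rpow_pos_of_pos (hVpos₁ b hb1) m
        simp only [hGdef]
        linarith
      have h2 := hupper b ⟨hbpos, le_refl b⟩
      have h3 : G b ≤ Mq * r₁ b ^ (-κ) := le_trans h1 h2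
      have h4 : r₁ b ^ (-κ) * r₁ b ^ κ = 1 := by
        rw [← Real.rpow_add hr₁b]
        simp
      calc δ₂ = G b * r₁ b ^ κ := rfl
        _ ≤ (Mq * r₁ b ^ (-κ)) * r₁ b ^ κ :=
            mul_le_mul_of_nonneg_right h3 (Real.rpow_pos_of_pos hr₁b κ).le
        _ = Mq * (r₁ b ^ (-κ) * r₁ b ^ κ) := by ring
        _ = Mq := by rw [h4]; ring
    set ρm : ℝ := 1 - δ₂ / Mq with hρmdef
    have hρmlt1 : ρm < 1 := by
      have hd := div_pos hδ₂pos hMqpos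
      simp only [hρmdef]
      linarith
    have hVmρ : ∀ z ∈ Set.Ioc (0:ℝ) b, ((-(r₁' z))⁻¹) ^ m ≤ ρm * ((-(r₂' z))⁻¹) ^ m := by
      intro z hz
      have hzA : z ∈ Set.Ioo (0:ℝ) A := ⟨hz.1, lt_of_le_of_lt hz.2 hb⟩
      have hr₁z : 0 < r₁ z := (hp₁ z hzA).1
      have hup := hupper z hz
      have hlo := hlow z hz
      have hVeq : ((-(r₁' z))⁻¹) ^ m = ((-(r₂' z))⁻¹) ^ m - G z := by
        simp only [hGdef]; ring
      have hstep : (δ₂ / Mq) * ((-(r₂' z))⁻¹) ^ m ≤ δ₂ * r₁ z ^ (-κ) := by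
        have hmul := mul_le_mul_of_nonneg_left hup (le_of_lt (div_pos hδ₂pos hMqpos))
        calc (δ₂/Mq) * ((-(r₂' z))⁻¹)^m ≤ (δ₂/Mq) * (Mq * r₁ z ^ (-κ)) := hmul
          _ = δ₂ * r₁ z ^ (-κ) := by
              rw [div_mul_eq_mul_div, mul_comm Mq (r₁ z ^ (-κ)), ← mul_assoc,
                mul_div_assoc, div_self (ne_of_gt hMqpos), mul_one]
      have hexp : ρm * ((-(r₂' z))⁻¹) ^ m
          = ((-(r₂' z))⁻¹) ^ m - (δ₂/Mq) * ((-(r₂' z))⁻¹) ^ m := by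
        rw [hρmdef]; ring
      rw [hVeq, hexp]
      linarith [le_trans hstep hlo]
    have hρmpos : 0 < ρm := by
      by_contra hle
      push_neg at hle
      have h1 := hVmρ b ⟨hbpos, le_refl b⟩
      have h2 : 0 < ((-(r₁' b))⁻¹) ^ m := Real.rpow_pos_of_pos (hVpos₁ b hb1) m
      have h3 : 0 < ((-(r₂' b))⁻¹) ^ m := Real.rpow_pos_of_pos (hVpos₂ b (hsub12 hb1)) m
      have h4 : ρm * ((-(r₂' b))⁻¹) ^ m ≤ 0 := by
        nlinarith [mul_nonneg (neg_nonneg.2 hle) h3.le]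
      linarith
    set ρ : ℝ := ρm ^ (1/m) with hρdef
    have hρpos : 0 < ρ := Real.rpow_pos_of_pos hρmpos _
    have hρlt1 : ρ < 1 := Real.rpow_lt_one hρmpos.le hρmlt1 (by positivity)
    have hρpow : ρ ^ m = ρm := by
      rw [hρdef, ← Real.rpow_mul hρmpos.le, one_div,
        inv_mul_cancel₀ (ne_of_gt hm0), Real.rpow_one]
    have hVρ : ∀ z ∈ Set.Ioc (0:ℝ) b, (-(r₁' z))⁻¹ ≤ ρ * (-(r₂' z))⁻¹ := by
      intro z hz
      have hzA : z ∈ Set.Ioo (0:ℝ) A := ⟨hz.1, lt_of_le_of_lt hz.2 hb⟩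
      have hV1 : 0 < (-(r₁' z))⁻¹ := hVpos₁ z hzA
      have hV2 : 0 < (-(r₂' z))⁻¹ := hVpos₂ z (hsub12 hzA)
      by_contra hgt
      push_neg at hgt
      have h1 : (ρ * (-(r₂' z))⁻¹) ^ m < ((-(r₁' z))⁻¹) ^ m :=
        Real.rpow_lt_rpow (by positivity) hgt hm0
      rw [Real.mul_rpow hρpos.le hV2.le, hρpow] at h1
      linarith [hVmρ z hz]
    set σ : ℝ := 1 - ρ with hσdef
    have hσpos : 0 < σ := by simp only [hσdef]; linarith
    have htσ : ∀ z ∈ Set.Ioc (0:ℝ) b, r₁' z - r₂' z - σ * r₁' z ≤ 0 := by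
      intro z hz
      have hzA : z ∈ Set.Ioo (0:ℝ) A := ⟨hz.1, lt_of_le_of_lt hz.2 hb⟩
      have hd1 : r₁' z < 0 := (hp₁ z hzA).2.2.2.2.1
      have hd2 : r₂' z < 0 := (hp₂ z (hsub12 hzA)).2.2.2.2.1
      have hV := hVρ z hz
      have ha : 0 < -(r₁' z) := by linarith
      have hc : 0 < -(r₂' z) := by linarith
      have key : -(r₂' z) ≤ ρ * (-(r₁' z)) := by
        have h1 := mul_le_mul_of_nonneg_left hV (le_of_lt (mul_pos ha hc))
        have h2 : (-(r₁' z) * -(r₂' z)) * (-(r₁' z))⁻¹ = -(r₂' z) := by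
          rw [mul_comm, ← mul_assoc, inv_mul_cancel₀ ha.ne', one_mul]
        have h3 : (-(r₁' z) * -(r₂' z)) * (ρ * (-(r₂' z))⁻¹) = ρ * (-(r₁' z)) := by
          rw [mul_comm ρ, ← mul_assoc, mul_assoc (-(r₁' z)), mul_inv_cancel₀ hc.ne', mul_one,
            mul_comm]
        rw [h2, h3] at h1
        exact h1
      simp only [hσdef]
      nlinarith [key]
    set W : ℝ → ℝ := fun y => (r₁ y - r₂ y) - σ * r₁ y with hWdef
    have hWd : ∀ z ∈ Set.Ioc (0:ℝ) b, HasDerivAt W (r₁' z - r₂' z - σ * r₁' z) z := by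
      intro z hz
      have hzA : z ∈ Set.Ioo (0:ℝ) A := ⟨hz.1, lt_of_le_of_lt hz.2 hb⟩
      have d1 := (hp₁ z hzA).2.2.2.1
      have d2 := (hp₂ z (hsub12 hzA)).2.2.2.1
      exact (d1.sub d2).sub (d1.const_mul σ)
    have hWanti : AntitoneOn W (Set.Ioc 0 b) :=
      antitoneOn_Ioc_of_hasDerivAt hWd (fun z hz => htσ z (Set.Ioo_subset_Ioc_self hz))
    set x : ℝ := r₁ b + (1 + (r₂ b - r₁ b)) / σ with hxdef
    have hr₂b : r₁ b < r₂ b := hlt b hb1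
    have hxgt : r₁ b < x := by
      have hq2 : 0 < (1 + (r₂ b - r₁ b)) / σ := div_pos (by linarith) hσpos
      simp only [hxdef]
      linarith
    have hx0 : 0 < x := lt_trans hr₁b hxgt
    have hxE : (x : EReal) < R₁ := by rw [hR₁top]; exact EReal.coe_lt_top x
    obtain ⟨v, hv, hrv⟩ := hi₁.2 x hx0 hxE
    have hvb : v < b := by
      by_contra hvb
      push_neg at hvb
      rcases eq_or_lt_of_le hvb with he | hlt2
      · rw [he, hrv] at hxgt
        exact lt_irrefl _ hxgt
      · have hanti := anti₁ hb1 hv hlt2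
        rw [hrv] at hanti
        linarith
    have hWvb : W b ≤ W v := hWanti ⟨hv.1, hvb.le⟩ ⟨hbpos, le_refl b⟩ hvb.le
    have h1 : (r₁ b - r₂ b) - σ * r₁ b ≤ (r₁ v - r₂ v) - σ * r₁ v := hWvb
    rw [hrv] at h1
    have hneg : r₁ v - r₂ v < 0 := sub_neg.2 (hlt v hv)
    rw [hrv] at hneg
    have hσx : σ * x = σ * r₁ b + 1 + (r₂ b - r₁ b) := by
      simp only [hxdef]
      field_simp
      ring
    linarith [h1, hneg, hσx]
  · -- R₁ finite : case 4
    have hR₁bot : R₁ ≠ ⊥ := (lt_of_le_of_lt bot_le hR₁pos).ne'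
    set Rr : ℝ := R₁.toReal with hRrdef
    have hRE : (Rr : EReal) = R₁ := EReal.coe_toReal hR₁top hR₁bot
    have hRr : ∀ z ∈ Set.Ioo (0:ℝ) A, r₁ z < Rr := by
      intro z hz
      rw [← EReal.coe_lt_coe_iff, hRE]
      exact (hp₁ z hz).2.1
    set C₀ : ℝ := c₁ / r₂ b with hC₀def
    have hr₂bpos : 0 < r₂ b := (hp₂ b (hsub12 hb1)).1
    have hC₀pos : 0 < C₀ := div_pos hc₁pos hr₂bpos
    set Φ : ℝ → ℝ := fun y => Real.log (G y) + C₀ * r₁ y with hΦdef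
    have hΦd : ∀ z ∈ Set.Ioc (0:ℝ) b, HasDerivAt Φ (Dv z / G z + C₀ * r₁' z) z := by
      intro z hz
      have hzA : z ∈ Set.Ioo (0:ℝ) A := ⟨hz.1, lt_of_le_of_lt hz.2 hb⟩
      exact ((hGd z hzA).log (ne_of_gt (hGpos z hzA))).add
        (((hp₁ z hzA).2.2.2.1).const_mul C₀)
    have hΦanti : AntitoneOn Φ (Set.Ioc 0 b) := by
      apply antitoneOn_Ioc_of_hasDerivAt hΦd
      intro z hz
      have hzA : z ∈ Set.Ioo (0:ℝ) A := ⟨hz.1, lt_trans hz.2 hb⟩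
      have hGz := hGpos z hzA
      have hd'z : r₁' z < 0 := (hp₁ z hzA).2.2.2.2.1
      have hr₂z : r₂ b ≤ r₂ z := (anti₂ (hsub12 hzA) (hsub12 hb1) hz.2).le
      have hbound := hGd_le z hzA
      have h1 : Dv z / G z ≤ (c₁ * G z * (-(r₁' z)) / r₂ z) / G z :=
        div_le_div_of_nonneg_right hbound hGz.le
      have h2 : (c₁ * G z * (-(r₁' z)) / r₂ z) / G z = c₁ * (-(r₁' z)) / r₂ z :=
        h2gen c₁ (G z) _ _ (ne_of_gt hGz)
      have h3 : c₁ * (-(r₁' z)) / r₂ z ≤ c₁ * (-(r₁' z)) / r₂ b :=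
        div_le_div_of_nonneg_left (by nlinarith [hc₁pos, hd'z]) hr₂bpos hr₂z
      have h4 : c₁ * (-(r₁' z)) / r₂ b = -(C₀ * r₁' z) := by
        rw [hC₀def]; ring
      have h5 : Dv z / G z ≤ -(C₀ * r₁' z) := by
        rw [← h4]
        calc Dv z / G z ≤ (c₁ * G z * (-(r₁' z)) / r₂ z) / G z := h1
          _ = c₁ * (-(r₁' z)) / r₂ z := h2
          _ ≤ c₁ * (-(r₁' z)) / r₂ b := h3
      linarith
    have htr₁ : Filter.Tendsto r₁ (nhdsWithin 0 (Set.Ioi 0)) (limR R₁) :=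
      rr_tendsto hR₁pos hα₁pos hi₁ anti₁
    have htr₂ : Filter.Tendsto r₂ (nhdsWithin 0 (Set.Ioi 0)) (limR R₂) :=
      rr_tendsto hR₂pos hα₂pos hi₂ anti₂
    have htu₁ : Filter.Tendsto (fun e => u₁' (r₁ e)) (nhdsWithin 0 (Set.Ioi 0)) (nhds 0) :=
      (h₁.2.2.2.2.2.2.2).comp htr₁
    have htu₂ : Filter.Tendsto (fun e => u₂' (r₂ e)) (nhdsWithin 0 (Set.Ioi 0)) (nhds 0) :=
      (h₂.2.2.2.2.2.2.2).comp htr₂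
    have hIooA : Set.Ioo (0:ℝ) A ∈ nhdsWithin 0 (Set.Ioi 0) :=
      Ioo_mem_nhdsGT_of_mem (Set.left_mem_Ico.2 hα₁pos)
    have hV₁lim : Filter.Tendsto (fun e => (-(r₁' e))⁻¹) (nhdsWithin 0 (Set.Ioi 0)) (nhds 0) := by
      have hneg : Filter.Tendsto (fun e => -(u₁' (r₁ e))) (nhdsWithin 0 (Set.Ioi 0)) (nhds 0) := by
        have := htu₁.neg; rwa [neg_zero] at this
      apply hneg.congr'
      filter_upwards [hIooA] with e he
      rw [eq_inv_of_mul_eq_one_left (hchain₁ e he), inv_neg]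
    have hV₂lim : Filter.Tendsto (fun e => (-(r₂' e))⁻¹) (nhdsWithin 0 (Set.Ioi 0)) (nhds 0) := by
      have hneg : Filter.Tendsto (fun e => -(u₂' (r₂ e))) (nhdsWithin 0 (Set.Ioi 0)) (nhds 0) := by
        have := htu₂.neg; rwa [neg_zero] at this
      apply hneg.congr'
      filter_upwards [hIooA] with e he
      rw [eq_inv_of_mul_eq_one_left (hchain₂ e (hsub12 he)), inv_neg]
    have hGlim : Filter.Tendsto G (nhdsWithin 0 (Set.Ioi 0)) (nhds 0) := by
      have p2 := hV₂lim.rpow_const (p := m) (Or.inr hm0.le)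
      have p1 := hV₁lim.rpow_const (p := m) (Or.inr hm0.le)
      rw [Real.zero_rpow (ne_of_gt hm0)] at p1 p2
      have := p2.sub p1
      rw [sub_zero] at this
      exact this
    have hGb := hGpos b hb1
    set δ : ℝ := Real.exp (Real.log (G b) + C₀ * (r₁ b - Rr)) with hδdef
    have hδpos : 0 < δ := Real.exp_pos _
    have hlb : ∀ z ∈ Set.Ioc (0:ℝ) b, δ ≤ G z := by
      intro z hz
      have hzA : z ∈ Set.Ioo (0:ℝ) A := ⟨hz.1, lt_of_le_of_lt hz.2 hb⟩
      have hmono : Φ b ≤ Φ z := hΦanti hz ⟨hbpos, le_refl b⟩ hz.2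
      have h1 : Real.log (G b) + C₀ * r₁ b ≤ Real.log (G z) + C₀ * r₁ z := hmono
      have h2 : r₁ z < Rr := hRr z hzA
      have h3 : Real.log (G b) + C₀ * (r₁ b - Rr) ≤ Real.log (G z) := by nlinarith [h1, h2, hC₀pos]
      calc δ = Real.exp (Real.log (G b) + C₀ * (r₁ b - Rr)) := rfl
        _ ≤ Real.exp (Real.log (G z)) := Real.exp_le_exp.2 h3
        _ = G z := Real.exp_log (hGpos z hzA)
    have hev : ∀ᶠ e in nhdsWithin 0 (Set.Ioi 0), G e < δ :=
      hGlim.eventually (eventually_lt_nhds hδpos)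
    have hmemb : Set.Ioo (0:ℝ) b ∈ nhdsWithin 0 (Set.Ioi 0) :=
      Ioo_mem_nhdsGT_of_mem (Set.left_mem_Ico.2 hbpos)
    obtain ⟨e, he1, he2⟩ := (hev.and (Filter.eventually_iff.2 hmemb)).exists
    exact absurd (hlb e ⟨he2.1, he2.2.le⟩) (not_le.2 he1)


end
end
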